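/- Let 𝒜 and ℬ be two finite σ-structures. The following are equivalent: (i) every {∃,∧,≠}-FO sentence true in 𝒜 is true in ℬ; (ii) there exists an injective homomorphism from 𝒜 to ℬ. -/

import Mathlib

namespace MC

/-- Which logical symbols (beyond ∃, ∧ and relational atoms) are allowed. -/
structure Frag where
  eq : Bool
  ne : Bool
  neg : Bool
  orF : Bool
  allF : Bool

/-- Formulas over a relational signature `σ` (with arities `ar`) in the syntactic
fragment `F`, with `n` free variables (de Bruijn style, quantifiers bind the last
variable). Atomic relational formulas, conjunction and existential quantification
are always allowed; the other symbols only if enabled in `F`. -/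
inductive Fml (σ : Type) (ar : σ → ℕ) (F : Frag) : ℕ → Type
  | rel {n : ℕ} (r : σ) (v : Fin (ar r) → Fin n) : Fml σ ar F n
  | equal {n : ℕ} (h : F.eq = true) (i j : Fin n) : Fml σ ar F n
  | nequal {n : ℕ} (h : F.ne = true) (i j : Fin n) : Fml σ ar F n
  | fnot {n : ℕ} (h : F.neg = true) (φ : Fml σ ar F n) : Fml σ ar F n
  | fand {n : ℕ} (φ ψ : Fml σ ar F n) : Fml σ ar F n
  | forr {n : ℕ} (h : F.orF = true) (φ ψ : Fml σ ar F n) : Fml σ ar F n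
  | fex {n : ℕ} (φ : Fml σ ar F (n + 1)) : Fml σ ar F n
  | fall {n : ℕ} (h : F.allF = true) (φ : Fml σ ar F (n + 1)) : Fml σ ar F n

/-- Satisfaction of a formula in a structure with domain `A` and
interpretation `I`, under a valuation of the free variables. -/
def Sat {σ : Type} {ar : σ → ℕ} {F : Frag} {A : Type}
    (I : ∀ r : σ, (Fin (ar r) → A) → Prop) :
    ∀ {n : ℕ}, Fml σ ar F n → (Fin n → A) → Prop
  | _, .rel r v, val => I r fun i => val (v i)
  | _, .equal _ i j, val => val i = val j
  | _, .nequal _ i j, val => val i ≠ val j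
  | _, .fnot _ φ, val => ¬ Sat I φ val
  | _, .fand φ ψ, val => Sat I φ val ∧ Sat I ψ val
  | _, .forr _ φ ψ, val => Sat I φ val ∨ Sat I ψ val
  | _, .fex φ, val => ∃ a : A, Sat I φ (Fin.snoc val a)
  | _, .fall _ φ, val => ∀ a : A, Sat I φ (Fin.snoc val a)

end MC

namespace MC

/-- `h : A → B` is a homomorphism between the structures `(A, IA)` and `(B, IB)`. -/
def IsHom {σ : Type} {ar : σ → ℕ} {A B : Type}
    (IA : ∀ r : σ, (Fin (ar r) → A) → Prop)
    (IB : ∀ r : σ, (Fin (ar r) → B) → Prop) (h : A → B) : Prop :=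
  ∀ (r : σ) (t : Fin (ar r) → A), IA r t → IB r fun i => h (t i)

/-- The fragment {∃,∧,≠}-FO. -/
def ppNeFrag : Frag := ⟨false, true, false, false, false⟩

section Aux

variable {σ : Type} {ar : σ → ℕ}

/-- Conjunction of a nonempty list of formulas. -/
def conj {F : Frag} {n : ℕ} : Fml σ ar F n → List (Fml σ ar F n) → Fml σ ar F n
  | φ, [] => φ
  | φ, ψ :: l => .fand φ (conj ψ l)

lemma sat_conj {F : Frag} {A : Type} (I : ∀ r : σ, (Fin (ar r) → A) → Prop)
    {n : ℕ} (φ : Fml σ ar F n) (l : List (Fml σ ar F n)) (val : Fin n → A) :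
    Sat I (conj φ l) val ↔ Sat I φ val ∧ ∀ ψ ∈ l, Sat I ψ val := by
  induction l generalizing φ with
  | nil => simp [conj]
  | cons ψ l ih =>
      simp only [conj, Sat, ih, List.forall_mem_cons, and_assoc]

/-- Existential closure. -/
def exs {F : Frag} : (n : ℕ) → Fml σ ar F n → Fml σ ar F 0
  | 0, φ => φ
  | n + 1, φ => exs n (.fex φ)

lemma sat_exs {F : Frag} {A : Type} (I : ∀ r : σ, (Fin (ar r) → A) → Prop) :
    ∀ (n : ℕ) (φ : Fml σ ar F n),
      Sat I (exs n φ) Fin.elim0 ↔ ∃ val : Fin n → A, Sat I φ val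
  | 0, φ => by
      constructor
      · intro h; exact ⟨Fin.elim0, h⟩
      · rintro ⟨val, h⟩
        have hv : val = Fin.elim0 := Subsingleton.elim _ _
        rwa [hv] at h
  | n + 1, φ => by
      rw [exs, sat_exs I n]
      constructor
      · rintro ⟨val, a, h⟩; exact ⟨Fin.snoc val a, h⟩
      · rintro ⟨val, h⟩
        exact ⟨Fin.init val, val (Fin.last n), by rwa [Fin.snoc_init_self]⟩

lemma sat_of_hom {A B : Type}
    (IA : ∀ r : σ, (Fin (ar r) → A) → Prop)
    (IB : ∀ r : σ, (Fin (ar r) → B) → Prop)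
    {h : A → B} (hinj : Function.Injective h) (hhom : IsHom IA IB h) :
    ∀ {n : ℕ} (φ : Fml σ ar ppNeFrag n) (val : Fin n → A),
      Sat IA φ val → Sat IB φ (h ∘ val) := by
  intro n φ
  induction φ with
  | rel r v => intro val hs; exact hhom r _ hs
  | equal he i j => exact absurd he (by simp [ppNeFrag])
  | nequal hne i j =>
      intro val hs hc
      exact hs (hinj hc)
  | fnot hneg φ ih => exact absurd hneg (by simp [ppNeFrag])
  | fand φ ψ ihφ ihψ =>
      rintro val ⟨h1, h2⟩
      exact ⟨ihφ val h1, ihψ val h2⟩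
  | forr ho φ ψ _ _ => exact absurd ho (by simp [ppNeFrag])
  | fex φ ih =>
      rintro val ⟨a, ha⟩
      refine ⟨h a, ?_⟩
      have := ih _ ha
      rwa [Fin.comp_snoc] at this
  | fall hall φ _ => exact absurd hall (by simp [ppNeFrag])

end Aux

/-- {∃,∧,≠}-FO containment is characterised by injective homomorphism. -/
theorem ppNe_containment_iff_injective_hom {σ : Type} [Finite σ] (ar : σ → ℕ)
    {A B : Type} [Finite A] [Finite B] [Nonempty A] [Nonempty B]
    (IA : ∀ r : σ, (Fin (ar r) → A) → Prop)
    (IB : ∀ r : σ, (Fin (ar r) → B) → Prop) :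
    (∀ φ : Fml σ ar ppNeFrag 0, Sat IA φ Fin.elim0 → Sat IB φ Fin.elim0) ↔
      ∃ h : A → B, Function.Injective h ∧ IsHom IA IB h := by
  classical
  constructor
  · intro hcont
    haveI := Fintype.ofFinite σ
    set n := Nat.card A with hn
    let e : Fin n ≃ A := (Finite.equivFin A).symm
    -- list of true atoms of A
    let atomL : List (Fml σ ar ppNeFrag n) :=
      ((Finset.univ.filter fun p : Σ r : σ, Fin (ar r) → Fin n =>
          IA p.1 fun i => e (p.2 i)).toList).map fun p => Fml.rel p.1 p.2
    -- list of all disequalities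
    let neL : List (Fml σ ar ppNeFrag n) :=
      ((Finset.univ.filter fun p : Fin n × Fin n => p.1 ≠ p.2).toList).map
        fun p => Fml.nequal rfl p.1 p.2
    have hkey : ∀ ψ ∈ atomL ++ neL, Sat IA ψ (fun i => e i) := by
      intro ψ hψ
      rcases List.mem_append.1 hψ with hψ | hψ
      · rcases List.mem_map.1 hψ with ⟨p, hp, rfl⟩
        rw [Finset.mem_toList, Finset.mem_filter] at hp
        exact hp.2
      · rcases List.mem_map.1 hψ with ⟨p, hp, rfl⟩
        rw [Finset.mem_toList, Finset.mem_filter] at hp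
        exact fun hc => hp.2 (e.injective hc)
    -- membership → satisfaction in B (will be established after using hcont)
    cases hL : atomL ++ neL with
    | nil =>
        -- no atoms and no disequalities: A is a subsingleton with no true atoms
        obtain ⟨hatom, hne⟩ := List.append_eq_nil_iff.mp hL
        have hAsub : Subsingleton A := by
          constructor
          intro a a'
          by_contra hc
          have hmem : Fml.nequal (σ := σ) (ar := ar) (F := ppNeFrag) rfl (e.symm a) (e.symm a') ∈ neL := by
            apply List.mem_map.2
            refine ⟨(e.symm a, e.symm a'), ?_, rfl⟩
            rw [Finset.mem_toList, Finset.mem_filter]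
            exact ⟨Finset.mem_univ _, fun h => hc (by simpa using congrArg e h)⟩
          rw [hne] at hmem
          exact absurd hmem List.not_mem_nil
        have hnoatom : ∀ (r : σ) (t : Fin (ar r) → A), ¬ IA r t := by
          intro r t hIA
          have hmem : Fml.rel (σ := σ) (ar := ar) (F := ppNeFrag) r (fun i => e.symm (t i)) ∈ atomL := by
            apply List.mem_map.2
            refine ⟨⟨r, fun i => e.symm (t i)⟩, ?_, rfl⟩
            rw [Finset.mem_toList, Finset.mem_filter]
            refine ⟨Finset.mem_univ _, ?_⟩
            simpa using hIA
          rw [hatom] at hmem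
          exact absurd hmem List.not_mem_nil
        obtain ⟨b⟩ := ‹Nonempty B›
        refine ⟨fun _ => b, fun a a' _ => Subsingleton.elim a a', ?_⟩
        intro r t hIA
        exact absurd hIA (hnoatom r t)
    | cons φ l =>
        -- the canonical sentence
        have hSA : Sat IA (exs n (conj φ l)) Fin.elim0 := by
          rw [sat_exs]
          refine ⟨fun i => e i, ?_⟩
          rw [sat_conj]
          constructor
          · exact hkey φ (by rw [hL]; exact List.mem_cons_self)
          · intro ψ hψ
            exact hkey ψ (by rw [hL]; exact List.mem_cons_of_mem φ hψ)
        have hSB := hcont _ hSA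
        rw [sat_exs] at hSB
        obtain ⟨val, hval⟩ := hSB
        rw [sat_conj] at hval
        have hall : ∀ ψ ∈ atomL ++ neL, Sat IB ψ val := by
          intro ψ hψ
          rw [hL] at hψ
          rcases List.mem_cons.1 hψ with rfl | hψ
          · exact hval.1
          · exact hval.2 ψ hψ
        refine ⟨fun a => val (e.symm a), ?_, ?_⟩
        · intro a a' hc
          by_contra hne'
          have hmem : Fml.nequal (σ := σ) (ar := ar) (F := ppNeFrag) rfl (e.symm a) (e.symm a') ∈ atomL ++ neL := by
            apply List.mem_append.2
            right
            apply List.mem_map.2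
            refine ⟨(e.symm a, e.symm a'), ?_, rfl⟩
            rw [Finset.mem_toList, Finset.mem_filter]
            exact ⟨Finset.mem_univ _, fun h => hne' (by simpa using congrArg e h)⟩
          exact (hall _ hmem) hc
        · intro r t hIA
          have hmem : Fml.rel (σ := σ) (ar := ar) (F := ppNeFrag) r (fun i => e.symm (t i)) ∈ atomL ++ neL := by
            apply List.mem_append.2
            left
            apply List.mem_map.2
            refine ⟨⟨r, fun i => e.symm (t i)⟩, ?_, rfl⟩
            rw [Finset.mem_toList, Finset.mem_filter]
            exact ⟨Finset.mem_univ _, by simpa using hIA⟩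
          exact hall _ hmem
  · rintro ⟨h, hinj, hhom⟩ φ hsat
    have := sat_of_hom IA IB hinj hhom φ Fin.elim0 hsat
    have h0 : (h ∘ Fin.elim0 : Fin 0 → B) = Fin.elim0 := Subsingleton.elim _ _
    rwa [h0] at this

end MC
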